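/- Let (κ_n) and (v_n) be sequences with κ_n ≥ 0 and v_n > 0 for all n, and set d1_n := −κ_n/v_n + v_n/2. If v_n → 0 as n → ∞, then C_BS(κ_n, v_n) ~ (−U′(−d1_n)) · φ(d1_n) · v_n, i.e. the ratio of the two sides tends to 1. -/

import Mathlib

open MeasureTheory Filter Topology

/-- Standard normal density `φ(z) = e^{-z²/2}/√(2π)`. -/
noncomputable def stdPDF (z : ℝ) : ℝ := Real.exp (-(z^2)/2) / Real.sqrt (2*Real.pi)

/-- Standard normal distribution function `Φ(z) = ∫_{-∞}^z φ(t) dt`. -/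
noncomputable def stdCDF (z : ℝ) : ℝ := ∫ t in Set.Iic z, stdPDF t

/-- Black–Scholes call price `C_BS(κ,v) = Φ(d1) - e^κ Φ(d2)` with
`d1 = -κ/v + v/2`, `d2 = -κ/v - v/2`. -/
noncomputable def CBS (κ v : ℝ) : ℝ :=
  stdCDF (-κ/v + v/2) - Real.exp κ * stdCDF (-κ/v - v/2)

/-- Mills ratio `U(z) = Φ(-z)/φ(z)`. -/
noncomputable def mills (z : ℝ) : ℝ := stdCDF (-z) / stdPDF z

lemma stdPDF_pos (z : ℝ) : 0 < stdPDF z :=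
  div_pos (Real.exp_pos _) (Real.sqrt_pos.2 (by positivity))

lemma stdPDF_neg (z : ℝ) : stdPDF (-z) = stdPDF z := by simp [stdPDF]

lemma continuous_stdPDF : Continuous stdPDF := by
  unfold stdPDF; fun_prop

lemma hasDerivAt_stdPDF (z : ℝ) : HasDerivAt stdPDF (-z * stdPDF z) z := by
  have h : HasDerivAt (fun z : ℝ => Real.exp (-(z^2)/2)) (-z * Real.exp (-(z^2)/2)) z := by
    have h1 : HasDerivAt (fun z : ℝ => -(z^2)/2) (-z) z := by
      have := ((hasDerivAt_pow 2 z).neg).div_const 2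
      norm_num at this
      refine this.congr_deriv (Eq.symm ?_)
      ring
    exact ((Real.hasDerivAt_exp _).comp z h1).congr_deriv (by ring)
  have h2 := h.div_const (Real.sqrt (2*Real.pi))
  have : stdPDF = fun z : ℝ => Real.exp (-(z^2)/2) / Real.sqrt (2*Real.pi) := rfl
  rw [this]
  refine h2.congr_deriv (Eq.symm ?_)
  simp [stdPDF]; ring

lemma integrable_stdPDF : Integrable stdPDF := by
  have : Integrable (fun x : ℝ => Real.exp (-(1/2) * x^2)) := integrable_exp_neg_mul_sq (by norm_num)
  have h2 := this.div_const (Real.sqrt (2*Real.pi))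
  refine h2.congr (Filter.Eventually.of_forall fun x => ?_)
  simp [stdPDF]; ring_nf

lemma hasDerivAt_stdCDF (z : ℝ) : HasDerivAt stdCDF (stdPDF z) z := by
  have key : ∀ x : ℝ, stdCDF x = stdCDF 0 + ∫ t in (0:ℝ)..x, stdPDF t := by
    intro x
    have := intervalIntegral.integral_Iic_sub_Iic (f := stdPDF) (μ := volume)
      (a := (0:ℝ)) (b := x) integrable_stdPDF.integrableOn integrable_stdPDF.integrableOn
    unfold stdCDF
    linarith [this]
  have h : HasDerivAt (fun x => stdCDF 0 + ∫ t in (0:ℝ)..x, stdPDF t) (stdPDF z) z := by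
    refine (intervalIntegral.integral_hasDerivAt_right
      (integrable_stdPDF.intervalIntegrable)
      (continuous_stdPDF.aestronglyMeasurable.stronglyMeasurableAtFilter)
      continuous_stdPDF.continuousAt).const_add _
  exact h.congr_of_eventuallyEq (Filter.Eventually.of_forall key)

lemma continuous_stdCDF : Continuous stdCDF := by
  exact continuous_iff_continuousAt.2 fun z => (hasDerivAt_stdCDF z).continuousAt

lemma stdCDF_pos (z : ℝ) : 0 < stdCDF z := by
  have h1 : stdCDF z - stdCDF (z-1) = ∫ t in (z-1)..z, stdPDF t := by
    have := intervalIntegral.integral_Iic_sub_Iic (f := stdPDF) (μ := volume)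
      (a := z-1) (b := z) integrable_stdPDF.integrableOn integrable_stdPDF.integrableOn
    unfold stdCDF; linarith [this]
  have h2 : 0 < ∫ t in (z-1)..z, stdPDF t := by
    apply intervalIntegral.intervalIntegral_pos_of_pos
    · exact integrable_stdPDF.intervalIntegrable
    · exact fun t => stdPDF_pos t
    · linarith
  have h3 : 0 ≤ stdCDF (z-1) := setIntegral_nonneg measurableSet_Iic fun t _ => (stdPDF_pos t).le
  linarith

lemma tendsto_stdCDF_neg_atTop : Tendsto (fun z : ℝ => stdCDF (-z)) atTop (𝓝 0) := by
  have h := tendsto_setIntegral_of_antitone (μ := volume) (f := stdPDF)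
    (ι := ℝ) (s := fun x => Set.Iic (-x))
    (fun i => measurableSet_Iic)
    (fun a b hab => Set.Iic_subset_Iic.2 (by linarith))
    ⟨0, integrable_stdPDF.integrableOn⟩
  have hempty : (⋂ x : ℝ, Set.Iic (-x)) = ∅ := by
    ext t; simp only [Set.mem_iInter, Set.mem_Iic, Set.mem_empty_iff_false, iff_false, not_forall]
    exact ⟨-(t-1), by push_neg; linarith⟩
  rw [hempty] at h
  simpa [stdCDF] using h

lemma mills_pos (z : ℝ) : 0 < mills z := div_pos (stdCDF_pos _) (stdPDF_pos _)

lemma hasDerivAt_mills (z : ℝ) : HasDerivAt mills (z * mills z - 1) z := by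
  have h1 : HasDerivAt (fun z : ℝ => stdCDF (-z)) (-stdPDF (-z)) z := by
    exact ((hasDerivAt_stdCDF (-z)).comp z (hasDerivAt_neg z)).congr_deriv (by ring)
  have h2 := hasDerivAt_stdPDF z
  have h := h1.div h2 (stdPDF_pos z).ne'
  refine h.congr_deriv (Eq.symm ?_)
  rw [stdPDF_neg]
  have hφ := (stdPDF_pos z).ne'
  field_simp [mills]
  rw [mills, sub_mul, mul_assoc, div_mul_cancel₀ _ hφ]; ring

lemma deriv_mills_eq : deriv mills = fun z => z * mills z - 1 :=
  funext fun z => (hasDerivAt_mills z).deriv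

lemma pos_of_deriv_neg {F F' : ℝ → ℝ} {a : ℝ} (hF : ∀ x, a < x → HasDerivAt F (F' x) x)
    (hneg : ∀ x, a < x → F' x < 0)
    (hlim : Tendsto F atTop (𝓝 0)) : ∀ z, a < z → 0 < F z := by
  intro z hz
  have hanti : StrictAntiOn F (Set.Ici z) := by
    apply strictAntiOn_of_deriv_neg (convex_Ici z)
    · exact fun x hx => ((hF x (lt_of_lt_of_le hz hx)).continuousAt).continuousWithinAt
    · intro x hx
      rw [interior_Ici] at hx
      rw [(hF x (lt_trans hz hx)).deriv]
      exact hneg x (lt_trans hz hx)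
  have h1 : F (z+1) < F z := hanti (Set.self_mem_Ici) (by simp only [Set.mem_Ici]; linarith) (by linarith)
  have h2 : 0 ≤ F (z+1) := by
    refine le_of_tendsto hlim ?_
    filter_upwards [eventually_ge_atTop (z+1)] with x hx
    rcases eq_or_lt_of_le hx with h | h
    · rw [h]
    · exact (hanti (by simp only [Set.mem_Ici]; linarith) (by simp only [Set.mem_Ici]; linarith) h).le
  linarith

lemma neg_of_deriv_pos {F F' : ℝ → ℝ} {a : ℝ} (hF : ∀ x, a < x → HasDerivAt F (F' x) x)
    (hpos : ∀ x, a < x → 0 < F' x)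
    (hlim : Tendsto F atTop (𝓝 0)) : ∀ z, a < z → F z < 0 := by
  intro z hz
  have := pos_of_deriv_neg (F := fun x => -F x) (F' := fun x => -F' x)
    (fun x hx => (hF x hx).neg) (fun x hx => by simpa using (hpos x hx))
    (by simpa using hlim.neg) z hz
  simpa using this

lemma tendsto_stdPDF_atTop : Tendsto stdPDF atTop (𝓝 0) := by
  have h1 : Tendsto (fun z : ℝ => -(z^2)/2) atTop atBot := by
    apply Filter.Tendsto.atBot_div_const (by norm_num : (0:ℝ) < 2)
    exact tendsto_neg_atBot_iff.2 (tendsto_pow_atTop (by norm_num))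
  have h2 : Tendsto (fun z : ℝ => Real.exp (-(z^2)/2)) atTop (𝓝 0) :=
    Real.tendsto_exp_atBot.comp h1
  have : stdPDF = fun z : ℝ => Real.exp (-(z^2)/2) / Real.sqrt (2*Real.pi) := rfl
  rw [this]
  simpa only [zero_div] using h2.div_const (Real.sqrt (2*Real.pi))

lemma hasDerivAt_CDFneg (z : ℝ) : HasDerivAt (fun z : ℝ => stdCDF (-z)) (-stdPDF z) z := by
  have := (hasDerivAt_stdCDF (-z)).comp z (hasDerivAt_neg z)
  exact this.congr_deriv (by rw [stdPDF_neg]; ring)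

lemma hasDerivAt_FF {q q' : ℝ → ℝ} {z : ℝ} (hq : HasDerivAt q (q' z) z) :
    HasDerivAt (fun z => stdCDF (-z) - stdPDF z * q z)
      (stdPDF z * (-1 + z * q z - q' z)) z := by
  have h2 := (hasDerivAt_stdPDF z).mul hq
  have h := (hasDerivAt_CDFneg z).sub h2
  refine h.congr_deriv (Eq.symm ?_)
  ring

lemma tendsto_FF {q : ℝ → ℝ} (hq : Tendsto q atTop (𝓝 0)) :
    Tendsto (fun z => stdCDF (-z) - stdPDF z * q z) atTop (𝓝 0) := by
  have := tendsto_stdCDF_neg_atTop.sub (tendsto_stdPDF_atTop.mul hq)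
  simpa using this

lemma mills_gt (z : ℝ) : z / (1 + z^2) < mills z := by
  have key : 0 < stdCDF (-z) - stdPDF z * (z / (1 + z^2)) := by
    refine pos_of_deriv_neg (a := z - 1)
      (F := fun x => stdCDF (-x) - stdPDF x * (x / (1 + x^2)))
      (F' := fun x => stdPDF x * (-2/(1+x^2)^2))
      (fun x _ => ?_) (fun x _ => ?_) ?_ z (by linarith)
    · have hden : (1 + x^2) ≠ 0 := by positivity
      have h1 : HasDerivAt (fun x : ℝ => 1 + x^2) (2*x) x := by
        simpa using (hasDerivAt_pow 2 x).const_add 1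
      have hq : HasDerivAt (fun x : ℝ => x/(1+x^2)) ((1-x^2)/(1+x^2)^2) x := by
        have h2 := (hasDerivAt_id x).div h1 hden
        refine h2.congr_deriv (Eq.symm ?_)
        rw [div_eq_div_iff (by positivity) (by positivity)]
        simp only [id]
        ring
      have h3 := hasDerivAt_FF (q' := fun x : ℝ => (1-x^2)/(1+x^2)^2) hq
      refine h3.congr_deriv (Eq.symm ?_)
      have hne := (stdPDF_pos x).ne'
      field_simp
      ring
    · show stdPDF x * (-2/(1+x^2)^2) < 0
      apply mul_neg_of_pos_of_neg (stdPDF_pos x)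
      apply div_neg_of_neg_of_pos (by norm_num) (by positivity)
    · refine tendsto_FF ?_
      have hub : ∀ᶠ x : ℝ in atTop, x / (1 + x^2) ≤ x⁻¹ := by
        filter_upwards [eventually_gt_atTop (0:ℝ)] with x hx
        rw [div_le_iff₀ (by positivity), inv_mul_eq_div, le_div_iff₀ hx]
        nlinarith
      have hlb : ∀ᶠ x : ℝ in atTop, (0:ℝ) ≤ x / (1 + x^2) := by
        filter_upwards [eventually_gt_atTop (0:ℝ)] with x hx
        positivity
      exact tendsto_of_tendsto_of_tendsto_of_le_of_le' tendsto_const_nhds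
        tendsto_inv_atTop_zero hlb hub
  have hφ := stdPDF_pos z
  rw [mills, lt_div_iff₀ hφ]
  nlinarith [key]

lemma mills_lt_inv {z : ℝ} (hz : 0 < z) : mills z < 1 / z := by
  have key : stdCDF (-z) - stdPDF z * (1 / z) < 0 := by
    refine neg_of_deriv_pos (a := 0)
      (F := fun x => stdCDF (-x) - stdPDF x * (1/x))
      (F' := fun x => stdPDF x * (1/x^2))
      (fun x hx => ?_) (fun x hx => ?_) ?_ z hz
    · have hx' : x ≠ 0 := ne_of_gt hx
      have hq : HasDerivAt (fun x : ℝ => 1/x) (-1/x^2) x := by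
        have h2 := (hasDerivAt_const x (1:ℝ)).div (hasDerivAt_id x) hx'
        refine h2.congr_deriv (Eq.symm ?_)
        rw [div_eq_div_iff (by positivity) (by positivity)]
        simp only [id]
        ring
      have h3 := hasDerivAt_FF (q' := fun x : ℝ => -1/x^2) hq
      refine h3.congr_deriv (Eq.symm ?_)
      have hne := (stdPDF_pos x).ne'
      field_simp
      ring
    · show 0 < stdPDF x * (1/x^2)
      exact mul_pos (stdPDF_pos x) (by positivity)
    · refine tendsto_FF ?_
      exact tendsto_inv_atTop_zero.congr fun x => (one_div x).symm
  have hφ := stdPDF_pos z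
  rw [mills, div_lt_iff₀ hφ]
  nlinarith [key]

lemma mills_lt_cubic {z : ℝ} (hz : 0 < z) : mills z < 1/z - 1/z^3 + 3/z^5 := by
  have key : stdCDF (-z) - stdPDF z * (1/z - 1/z^3 + 3/z^5) < 0 := by
    refine neg_of_deriv_pos (a := 0)
      (F := fun x => stdCDF (-x) - stdPDF x * (1/x - 1/x^3 + 3/x^5))
      (F' := fun x => stdPDF x * (15/x^6))
      (fun x hx => ?_) (fun x hx => ?_) ?_ z hz
    · have hx' : x ≠ 0 := ne_of_gt hx
      have ha : HasDerivAt (fun x : ℝ => 1/x) (-1/x^2) x := by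
        have h2 := (hasDerivAt_const x (1:ℝ)).div (hasDerivAt_id x) hx'
        refine h2.congr_deriv (Eq.symm ?_)
        rw [div_eq_div_iff (by positivity) (by positivity)]
        simp only [id]; ring
      have hb : HasDerivAt (fun x : ℝ => 1/x^3) (-3/x^4) x := by
        have h2 := (hasDerivAt_const x (1:ℝ)).div (hasDerivAt_pow 3 x) (pow_ne_zero 3 hx')
        refine h2.congr_deriv (Eq.symm ?_)
        rw [div_eq_div_iff (by positivity) (by positivity)]
        push_cast
        ring
      have hc : HasDerivAt (fun x : ℝ => 3/x^5) (-15/x^6) x := by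
        have h2 := (hasDerivAt_const x (3:ℝ)).div (hasDerivAt_pow 5 x) (pow_ne_zero 5 hx')
        refine h2.congr_deriv (Eq.symm ?_)
        rw [div_eq_div_iff (by positivity) (by positivity)]
        push_cast
        ring
      have hq : HasDerivAt (fun x : ℝ => 1/x - 1/x^3 + 3/x^5)
          (-1/x^2 - (-3/x^4) + (-15/x^6)) x := (ha.sub hb).add hc
      have h3 := hasDerivAt_FF (q' := fun x : ℝ => -1/x^2 - (-3/x^4) + (-15/x^6)) hq
      refine h3.congr_deriv (Eq.symm ?_)
      have hne := (stdPDF_pos x).ne'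
      field_simp
      ring
    · show 0 < stdPDF x * (15/x^6)
      exact mul_pos (stdPDF_pos x) (by positivity)
    · refine tendsto_FF ?_
      have h1 : Tendsto (fun x : ℝ => 1/x) atTop (𝓝 0) :=
        tendsto_inv_atTop_zero.congr fun x => (one_div x).symm
      have h3 : Tendsto (fun x : ℝ => 1/x^3) atTop (𝓝 0) := by
        have := h1.pow 3
        simpa [div_pow] using this
      have h5 : Tendsto (fun x : ℝ => 3/x^5) atTop (𝓝 0) := by
        have := (h1.pow 5).const_mul (3:ℝ)
        have h2 : ∀ x : ℝ, 3 * (1/x)^5 = 3/x^5 := by intro x; rw [div_pow]; ring_nf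
        rw [show (3:ℝ) * 0 ^ 5 = 0 by norm_num] at this
        exact this.congr h2
      simpa using (h1.sub h3).add h5
  have hφ := stdPDF_pos z
  rw [mills, div_lt_iff₀ hφ]
  nlinarith [key]

noncomputable def gg (z : ℝ) : ℝ := 1 - z * mills z

lemma gg_pos (z : ℝ) : 0 < gg z := by
  rcases le_or_gt z 0 with h | h
  · have := mills_pos z
    have : z * mills z ≤ 0 := mul_nonpos_of_nonpos_of_nonneg h this.le
    unfold gg; linarith
  · have := mills_lt_inv h
    have h2 : z * mills z < z * (1/z) := by
      exact mul_lt_mul_of_pos_left this h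
    rw [mul_one_div, div_self (ne_of_gt h)] at h2
    unfold gg; linarith

lemma hasDerivAt_gg (z : ℝ) : HasDerivAt gg (-((1+z^2) * mills z - z)) z := by
  have h1 := (hasDerivAt_id z).mul (hasDerivAt_mills z)
  have h2 := ((hasDerivAt_const z (1:ℝ)).sub h1)
  have : gg = fun z => 1 - z * mills z := rfl
  rw [this]
  refine h2.congr_deriv (Eq.symm ?_)
  simp only [id]
  ring

lemma millsD2_pos (z : ℝ) : 0 < (1+z^2) * mills z - z := by
  have hden : (0:ℝ) < 1 + z^2 := by positivity
  nlinarith [(div_lt_iff₀ hden).1 (mills_gt z)]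

lemma gg_strictAnti : StrictAnti gg := by
  apply strictAnti_of_deriv_neg
  intro x
  rw [(hasDerivAt_gg x).deriv]
  linarith [millsD2_pos x]

lemma mills_strictAnti : StrictAnti mills := by
  apply strictAnti_of_deriv_neg
  intro x
  rw [(hasDerivAt_mills x).deriv]
  have := gg_pos x
  unfold gg at this
  linarith

lemma gg_lt_inv_sq {z : ℝ} (hz : 0 < z) : gg z < 1/z^2 := by
  have hden : (0:ℝ) < 1 + z^2 := by positivity
  have h' : z < mills z * (1+z^2) := (div_lt_iff₀ hden).1 (mills_gt z)
  unfold gg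
  rw [lt_div_iff₀ (by positivity : (0:ℝ) < z^2)]
  nlinarith [mul_lt_mul_of_pos_right h' (mul_pos hz hz),
    mul_lt_mul_of_pos_right (mul_lt_mul_of_pos_right h' (mul_pos hz hz)) hz,
    hden, hz, mills_pos z]

lemma gg_gt {z : ℝ} (hz : 0 < z) : 1/z^2 - 3/z^4 < gg z := by
  have h := mills_lt_cubic hz
  have h2 : z * mills z < z * (1/z - 1/z^3 + 3/z^5) := mul_lt_mul_of_pos_left h hz
  have h3 : z * (1/z - 1/z^3 + 3/z^5) = 1 - 1/z^2 + 3/z^4 := by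
    field_simp
  unfold gg
  rw [h3] at h2
  linarith

lemma continuous_gg : Continuous gg :=
  continuous_iff_continuousAt.2 fun x => (hasDerivAt_gg x).continuousAt

lemma tail_poly (ε z v : ℝ) (hε : 0 < ε) (hε1 : ε ≤ 1) (hz : 6 ≤ ε * z)
    (hv : 0 < v) (hv1 : v ≤ 1) :
    3*z^2 + (1-ε)*(z+v)^4 ≤ z^2*(z+v)^2 := by
  set w := z + v with hw
  have hz0 : 6 ≤ z := by nlinarith
  have hwz : z ≤ w := by simp only [hw]; linarith
  have hw0 : 0 < w := by linarith
  have h1 : w ≤ z * (1 + ε/6) := by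
    have h0 : 1 ≤ ε * z / 6 := by linarith
    have h2 : v ≤ ε * z / 6 := le_trans hv1 h0
    simp only [hw]; nlinarith
  have h2 : (1-ε) * w^2 ≤ (1-ε) * ((1 + ε/6)^2 * z^2) := by
    have hsq : w^2 ≤ (z * (1 + ε/6))^2 := by nlinarith
    nlinarith [hsq]
  have h3 : (1-ε) * ((1 + ε/6)^2 * z^2) ≤ (1 - 2*ε/3) * z^2 := by
    have : (1-ε) * (1 + ε/6)^2 ≤ 1 - 2*ε/3 := by nlinarith [sq_nonneg ε, pow_pos hε 3]
    nlinarith [sq_nonneg z]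
  have hA : 2*ε/3 * z^2 ≤ z^2 - (1-ε)*w^2 := by nlinarith
  have hB : z^2 * (2*ε/3 * z^2) ≤ w^2 * (z^2 - (1-ε)*w^2) :=
    mul_le_mul (by nlinarith) hA (by positivity) (by positivity)
  have hC : 3*z^2 ≤ z^2 * (2*ε/3 * z^2) := by
    have e1 : 6 * z^2 ≤ ε * z * z^2 := by nlinarith [sq_nonneg z]
    have e2 : 6 * z^3 ≤ ε * z^4 := by
      nlinarith [mul_le_mul_of_nonneg_right e1 (by linarith : (0:ℝ) ≤ z)]
    nlinarith [e2, sq_nonneg z]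
  have hfin : 3*z^2 ≤ w^2 * (z^2 - (1-ε)*w^2) := le_trans hC hB
  nlinarith [hfin]

lemma key_estimate {ε : ℝ} (hε : 0 < ε) (hε1 : ε ≤ 1) :
    ∃ δ : ℝ, 0 < δ ∧ ∀ z v : ℝ, 0 < v → v ≤ δ → -(v/2) ≤ z →
      (1-ε) * gg z ≤ gg (z+v) := by
  set Z : ℝ := 6/ε with hZ
  set M : ℝ := (1+(Z+1)^2) * mills (-1) + 1 with hM
  have hZpos : 0 < Z := by positivity
  have hm1 := mills_pos (-1)
  have hMpos : 0 < M := by positivity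
  have hggZ : 0 < gg (Z+1) := gg_pos _
  clear_value Z M
  refine ⟨min 1 (ε * gg (Z+1) / M), lt_min one_pos (by positivity), ?_⟩
  intro z v hv hvδ hz
  have hv1 : v ≤ 1 := le_trans hvδ (min_le_left _ _)
  have hvM : v ≤ ε * gg (Z+1) / M := le_trans hvδ (min_le_right _ _)
  rcases le_or_gt z Z with hcase | hcase
  · -- middle region
    obtain ⟨ξ, hξmem, hξ⟩ := exists_hasDerivAt_eq_slope gg
      (fun x => -((1+x^2)*mills x - x)) (by linarith : z < z + v)
      continuous_gg.continuousOn (fun x _ => hasDerivAt_gg x)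
    have hξ1 : (-1:ℝ) < ξ := by have := hξmem.1; linarith
    have hξ2 : ξ ≤ Z+1 := by have := hξmem.2; linarith
    have hmb : mills ξ < mills (-1) := mills_strictAnti hξ1
    have habs : ξ^2 ≤ (Z+1)^2 := by
      nlinarith [mul_nonneg (by linarith : (0:ℝ) ≤ Z+1-ξ) (by linarith : (0:ℝ) ≤ Z+1+ξ)]
    have hbound : (1+ξ^2)*mills ξ - ξ ≤ M := by
      have h1 : (1+ξ^2) * mills ξ ≤ (1+(Z+1)^2) * mills (-1) :=
        mul_le_mul (by nlinarith) hmb.le (mills_pos ξ).le (by positivity)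
      rw [hM]; linarith
    have hslope : gg (z+v) - gg z = v * (-((1+ξ^2)*mills ξ - ξ)) := by
      have hvne : v ≠ 0 := ne_of_gt hv
      have h0 : z + v - z = v := by ring
      rw [h0] at hξ
      have h1 := (eq_div_iff hvne).1 hξ
      linear_combination -h1
    have hvMle : v * M ≤ ε * gg (Z+1) := by
      rw [le_div_iff₀ hMpos] at hvM
      exact hvM
    have hggzZ : gg (Z+1) ≤ gg z := (gg_strictAnti (by linarith : z < Z+1)).le
    have hstep : gg z - v * M ≤ gg (z+v) := by
      have h2 : v * (-((1+ξ^2)*mills ξ - ξ)) ≥ -(v*M) := by nlinarith [hbound, hv]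
      linarith [hslope, h2]
    have : ε * gg (Z+1) ≤ ε * gg z := mul_le_mul_of_nonneg_left hggzZ hε.le
    nlinarith [hstep, hvMle, this]
  · -- tail region
    have hz0 : 0 < z := lt_trans hZpos hcase
    have hzv : 0 < z + v := by linarith
    have hgz : gg z < 1/z^2 := gg_lt_inv_sq hz0
    have hgzv : 1/(z+v)^2 - 3/(z+v)^4 < gg (z+v) := gg_gt hzv
    have hεz : 6 ≤ ε * z := by
      rw [hZ, div_lt_iff₀ hε] at hcase
      nlinarith [hcase]
    have hpoly : 3*z^2 + (1-ε)*(z+v)^4 ≤ z^2*(z+v)^2 :=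
      tail_poly ε z v hε hε1 hεz hv hv1
    have hstep : (1-ε)/z^2 ≤ 1/(z+v)^2 - 3/(z+v)^4 := by
      have hzvne : (z+v) ≠ 0 := ne_of_gt hzv
      have hcomb : 1/(z+v)^2 - 3/(z+v)^4 = ((z+v)^2 - 3)/(z+v)^4 := by
        field_simp
      rw [hcomb, div_le_div_iff₀ (by positivity) (by positivity)]
      nlinarith [hpoly]
    calc (1-ε)*gg z ≤ (1-ε) * (1/z^2) := mul_le_mul_of_nonneg_left hgz.le (by linarith)
      _ = (1-ε)/z^2 := by ring
      _ ≤ 1/(z+v)^2 - 3/(z+v)^4 := hstep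
      _ ≤ gg (z+v) := hgzv.le

lemma continuous_mills : Continuous mills :=
  continuous_iff_continuousAt.2 fun x => (hasDerivAt_mills x).continuousAt

lemma CBS_eq (k w : ℝ) (hw : 0 < w) :
    CBS k w = stdPDF (k/w - w/2) * (mills (k/w - w/2) - mills (k/w - w/2 + w)) := by
  set z : ℝ := k/w - w/2 with hz
  have hwne : w ≠ 0 := ne_of_gt hw
  have h1 : -k/w + w/2 = -z := by rw [hz]; field_simp; ring
  have h2 : -k/w - w/2 = -(z+w) := by rw [hz]; field_simp; ring
  have hexp : Real.exp k * stdPDF (z+w) = stdPDF z := by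
    simp only [stdPDF]
    rw [← mul_div_assoc, ← Real.exp_add]
    congr 2
    rw [hz]
    field_simp
    ring
  have hm1 : stdCDF (-z) = mills z * stdPDF z := by
    rw [mills, div_mul_cancel₀]
    exact (stdPDF_pos z).ne'
  have hm2 : stdCDF (-(z+w)) = mills (z+w) * stdPDF (z+w) := by
    rw [mills, div_mul_cancel₀]
    exact (stdPDF_pos (z+w)).ne'
  rw [CBS, h1, h2, hm1, hm2]
  rw [show Real.exp k * (mills (z+w) * stdPDF (z+w)) =
    mills (z+w) * (Real.exp k * stdPDF (z+w)) by ring, hexp]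
  ring

theorem CBS_asymptotics_v_to_zero_aux
    (κ v : ℕ → ℝ) (hκ : ∀ n, 0 ≤ κ n) (hv : ∀ n, 0 < v n)
    (d1 : ℕ → ℝ) (hd1 : ∀ n, d1 n = -(κ n) / v n + v n / 2)
    (hv0 : Tendsto v atTop (𝓝 0)) :
    Tendsto (fun n => CBS (κ n) (v n) /
        ((-(deriv mills (-(d1 n)))) * stdPDF (d1 n) * v n))
      atTop (𝓝 1) := by
  set z : ℕ → ℝ := fun n => κ n / v n - v n / 2 with hzdef
  have hz_d1 : ∀ n, d1 n = -(z n) := by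
    intro n
    rw [hd1 n, hzdef]
    have := (hv n).ne'
    field_simp
    ring
  have hzlb : ∀ n, -(v n/2) ≤ z n := by
    intro n
    have h := div_nonneg (hκ n) (hv n).le
    simp only [hzdef]
    linarith
  have hgpos : ∀ n, 0 < gg (z n) := fun n => gg_pos _
  have hexpr : ∀ n, (CBS (κ n) (v n) /
        ((-(deriv mills (-(d1 n)))) * stdPDF (d1 n) * v n))
      = (mills (z n) - mills (z n + v n)) / (gg (z n) * v n) := by
    intro n
    have hC : CBS (κ n) (v n) = stdPDF (z n) * (mills (z n) - mills (z n + v n)) :=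
      CBS_eq (κ n) (v n) (hv n)
    have hderiv : -(deriv mills (-(d1 n))) = gg (z n) := by
      rw [hz_d1 n, neg_neg, deriv_mills_eq]
      simp only [gg]
      ring
    have hpdf : stdPDF (d1 n) = stdPDF (z n) := by rw [hz_d1 n, stdPDF_neg]
    rw [hderiv, hpdf, hC]
    have hφ := (stdPDF_pos (z n)).ne'
    rw [mul_comm (gg (z n)) (stdPDF (z n)), mul_assoc, mul_div_mul_left _ _ hφ]
  -- MVT bounds
  have hbounds : ∀ n, gg (z n + v n) / gg (z n) ≤
      (mills (z n) - mills (z n + v n)) / (gg (z n) * v n) ∧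
      (mills (z n) - mills (z n + v n)) / (gg (z n) * v n) ≤ 1 := by
    intro n
    obtain ⟨ξ, hmem, hslope⟩ := exists_hasDerivAt_eq_slope mills
      (fun x => x * mills x - 1) (by linarith [hv n] : z n < z n + v n)
      continuous_mills.continuousOn (fun x _ => hasDerivAt_mills x)
    have hwne : v n ≠ 0 := (hv n).ne'
    have h0 : z n + v n - z n = v n := by ring
    rw [h0] at hslope
    have h1 := (eq_div_iff hwne).1 hslope
    have hnum : mills (z n) - mills (z n + v n) = v n * gg ξ := by
      simp only [gg]
      linear_combination h1
    have heq : (mills (z n) - mills (z n + v n)) / (gg (z n) * v n) = gg ξ / gg (z n) := by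
      rw [hnum, mul_comm (gg (z n)) (v n), mul_div_mul_left _ _ hwne]
    have hgl : gg (z n + v n) ≤ gg ξ := (gg_strictAnti hmem.2).le
    have hgu : gg ξ ≤ gg (z n) := (gg_strictAnti hmem.1).le
    constructor
    · rw [heq]
      gcongr
      exact (gg_pos _).le
    · rw [heq, div_le_one (hgpos n)]
      exact hgu
  rw [Metric.tendsto_atTop]
  intro ε hε
  have hε'0 : 0 < min (ε/2) 1 := lt_min (by linarith) one_pos
  have hε'1 : min (ε/2) 1 ≤ 1 := min_le_right _ _
  obtain ⟨δ, hδ0, hkey⟩ := key_estimate hε'0 hε'1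
  have hev : ∀ᶠ n in atTop, v n < δ := hv0.eventually (gt_mem_nhds hδ0)
  obtain ⟨N, hN⟩ := eventually_atTop.1 hev
  refine ⟨N, fun n hn => ?_⟩
  have hA := hkey (z n) (v n) (hv n) (hN n hn).le (hzlb n)
  have hAr : 1 - min (ε/2) 1 ≤ gg (z n + v n) / gg (z n) :=
    (le_div_iff₀ (hgpos n)).2 (by linarith [hA])
  obtain ⟨hlo, hhi⟩ := hbounds n
  rw [hexpr n] at *
  rw [Real.dist_eq]
  have h1 : |(mills (z n) - mills (z n + v n)) / (gg (z n) * v n) - 1| ≤ min (ε/2) 1 := by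
    rw [abs_le]
    constructor <;> [linarith [hAr, hlo]; linarith [hhi]]
  calc |(mills (z n) - mills (z n + v n)) / (gg (z n) * v n) - 1| ≤ min (ε/2) 1 := h1
    _ ≤ ε/2 := min_le_left _ _
    _ < ε := by linarith

/-- **Black–Scholes asymptotics when `v → 0`.** For `κ n ≥ 0`, `v n > 0`, with
`d1_n = -κ n/v n + v n/2` and `v n → 0`, one has
`C_BS(κ n, v n) ~ (-U'(-d1_n)) · φ(d1_n) · v n`. -/
theorem CBS_asymptotics_v_to_zero
    (κ v : ℕ → ℝ) (hκ : ∀ n, 0 ≤ κ n) (hv : ∀ n, 0 < v n)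
    (d1 : ℕ → ℝ) (hd1 : ∀ n, d1 n = -(κ n) / v n + v n / 2)
    (hv0 : Tendsto v atTop (𝓝 0)) :
    Tendsto (fun n => CBS (κ n) (v n) /
        ((-(deriv mills (-(d1 n)))) * stdPDF (d1 n) * v n))
      atTop (𝓝 1) := by
  exact CBS_asymptotics_v_to_zero_aux κ v hκ hv d1 hd1 hv0
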